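/- (G,f) is UAS if and only if the only θ-invariant normal subgroups of the group (G,·) are the trivial subgroup {e} and G itself. -/

import Mathlib

/-- The `n`-ary operation `f(x₁,…,xₙ) = x₁·θ(x₂)·θ²(x₃)⋯θ^{n-1}(xₙ)·b`
of the polyadic group `der_{θ,b}(G,·)`. -/
def polyF {G : Type*} [Group G] (n : ℕ) (θ : G ≃* G) (b : G) (x : Fin n → G) : G :=
  (List.ofFn fun i : Fin n => (⇑θ)^[(i : ℕ)] (x i)).prod * b

/-- The skew element `x̄ = b⁻¹·θ^{n−2}(x⁻¹)⋯θ²(x⁻¹)·θ(x⁻¹)`. -/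
def polySkew {G : Type*} [Group G] (n : ℕ) (θ : G ≃* G) (b : G) (x : G) : G :=
  b⁻¹ * (List.ofFn fun i : Fin (n - 2) => (⇑θ)^[n - 2 - (i : ℕ)] x⁻¹).prod

/-- `H` is a polyadic subgroup of `(G,f)`: nonempty, closed under `f` and the skew map. -/
def IsPolySubgroup {G : Type*} [Group G] (n : ℕ) (θ : G ≃* G) (b : G) (H : Set G) : Prop :=
  H.Nonempty ∧
  (∀ x : Fin n → G, (∀ i, x i ∈ H) → polyF n θ b x ∈ H) ∧
  (∀ x ∈ H, polySkew n θ b x ∈ H)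

/-- `H` is a normal polyadic subgroup of `(G,f)`. -/
def IsNormalPolySubgroup {G : Type*} [Group G] (n : ℕ) (θ : G ≃* G) (b : G) (H : Set G) : Prop :=
  IsPolySubgroup n θ b H ∧ ∀ x : G, ∀ h ∈ H, θ.symm (x⁻¹ * h) * x ∈ H

/-- A congruence of the polyadic group `(G,f)`. -/
def IsPolyCongruence {G : Type*} [Group G] (n : ℕ) (θ : G ≃* G) (b : G)
    (R : G → G → Prop) : Prop :=
  Equivalence R ∧
  (∀ x y : Fin n → G, (∀ i, R (x i) (y i)) → R (polyF n θ b x) (polyF n θ b y)) ∧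
  (∀ x y : G, R x y → R (polySkew n θ b x) (polySkew n θ b y))

section UASHelpers
variable {G : Type*} [Group G]

lemma UAS_iterOne (θ : G ≃* G) (k : ℕ) : (⇑θ)^[k] (1 : G) = 1 := by
  induction k with
  | zero => rfl
  | succ k ih => rw [Function.iterate_succ_apply', ih, map_one]

lemma UAS_iterMul (θ : G ≃* G) (k : ℕ) (x y : G) :
    (⇑θ)^[k] (x * y) = (⇑θ)^[k] x * (⇑θ)^[k] y := by
  induction k with
  | zero => rfl
  | succ k ih => rw [Function.iterate_succ_apply', Function.iterate_succ_apply',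
      Function.iterate_succ_apply', ih, map_mul]

lemma UAS_iterInv (θ : G ≃* G) (k : ℕ) (x : G) :
    (⇑θ)^[k] x⁻¹ = ((⇑θ)^[k] x)⁻¹ := by
  induction k with
  | zero => rfl
  | succ k ih => rw [Function.iterate_succ_apply', Function.iterate_succ_apply', ih, map_inv]

lemma UAS_prodSingle : ∀ (m : ℕ) (h : Fin m → G) (k : Fin m),
    (∀ i, i ≠ k → h i = 1) → (List.ofFn h).prod = h k := by
  intro m
  induction m with
  | zero => intro h k; exact k.elim0
  | succ m ih =>
    intro h k hk
    rw [List.ofFn_succ, List.prod_cons]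
    cases k using Fin.cases with
    | zero =>
      have : (List.ofFn fun i : Fin m => h i.succ).prod = 1 := by
        apply List.prod_eq_one
        intro x hx
        obtain ⟨i, rfl⟩ := List.mem_ofFn.mp hx
        exact hk i.succ (Fin.succ_ne_zero i)
      rw [this, mul_one]
    | succ k' =>
      have h0 : h 0 = 1 := hk 0 (Fin.succ_ne_zero k').symm
      have : (List.ofFn fun i : Fin m => h i.succ).prod = h k'.succ := by
        apply ih
        intro i hi
        exact hk i.succ (by simpa [Fin.succ_inj] using hi)
      rw [this, h0, one_mul]

lemma UAS_prodPair (m : ℕ) (h : Fin (m + 1) → G) (k : Fin (m + 1)) (hk : k ≠ 0)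
    (h1 : ∀ i, i ≠ 0 → i ≠ k → h i = 1) : (List.ofFn h).prod = h 0 * h k := by
  rw [List.ofFn_succ, List.prod_cons]
  congr 1
  have := UAS_prodSingle m (fun i : Fin m => h i.succ) (k.pred hk) ?_
  · rw [this, Fin.succ_pred]
  · intro i hi
    apply h1 i.succ (Fin.succ_ne_zero i)
    intro hc
    apply hi
    subst hc
    simp

lemma UAS_polyFPair (n : ℕ) (θ : G ≃* G) (b : G) (j : ℕ) (hj0 : 0 < j) (hjn : j < n) (a u : G) :
    polyF n θ b (fun i => if (i : ℕ) = 0 then a else if (i : ℕ) = j then u else 1)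
      = a * (⇑θ)^[j] u * b := by
  obtain ⟨m, rfl⟩ : ∃ m, n = m + 1 := ⟨n - 1, by omega⟩
  unfold polyF
  have hE := UAS_prodPair m
    (fun i : Fin (m+1) => (⇑θ)^[(i:ℕ)]
      (if (i : ℕ) = 0 then a else if (i : ℕ) = j then u else 1))
    ⟨j, hjn⟩ (by simp [Fin.ext_iff]; omega) ?_
  · rw [hE]
    simp [Fin.ext_iff, hj0.ne']
  · intro i hi0 hij
    have hv0 : (i : ℕ) ≠ 0 := by intro h; apply hi0; ext; simp [h]
    have hvj : (i : ℕ) ≠ j := by simpa [Fin.ext_iff] using hij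
    simp [hv0, hvj, UAS_iterOne]

end UASHelpers

/-- `(G,f)` is UAS iff the only `θ`-invariant normal subgroups of `(G,·)` are
the trivial subgroup and `G` itself. -/
theorem UAS_iff_theta_simple {G : Type*} [Group G] (n : ℕ) (hn : 2 ≤ n)
    (θ : G ≃* G) (b : G) (hbθ : θ b = b)
    (hθ : ∀ x : G, (⇑θ)^[n - 1] x = b * x * b⁻¹) :
    (∀ R : G → G → Prop, IsPolyCongruence n θ b R →
      (∀ x y : G, R x y ↔ x = y) ∨ (∀ x y : G, R x y)) ↔
    (∀ N : Subgroup G, N.Normal → (∀ x ∈ N, θ x ∈ N) → N = ⊥ ∨ N = ⊤) := by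
  constructor
  · -- UAS → θ-simple
    intro hUAS N hNorm hθN
    haveI := hNorm
    have hIter : ∀ (k : ℕ) (z : G), z ∈ N → (⇑θ)^[k] z ∈ N := by
      intro k
      induction k with
      | zero => exact fun z hz => hz
      | succ k ih =>
        intro z hz
        rw [Function.iterate_succ_apply']
        exact hθN _ (ih z hz)
    set R : G → G → Prop := fun x y => x⁻¹ * y ∈ N with hR
    have hKey : ∀ x y : G, ((x : G ⧸ N) = y) ↔ R x y := fun x y => QuotientGroup.eq
    have hcong : IsPolyCongruence n θ b R := by
      refine ⟨⟨fun x => by simpa [hR] using N.one_mem, fun {x y} h => ?_, fun {x y z} h1 h2 => ?_⟩, ?_, ?_⟩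
      · have := N.inv_mem h
        simpa [hR] using this
      · have := N.mul_mem h1 h2
        simpa [hR, mul_assoc] using this
      · -- f-compatibility
        intro x y hxy
        rw [← hKey]
        show ((QuotientGroup.mk' N) (polyF n θ b x)) = (QuotientGroup.mk' N) (polyF n θ b y)
        unfold polyF
        rw [map_mul, map_mul, map_list_prod, map_list_prod, List.map_ofFn, List.map_ofFn]
        congr 2
        refine congrArg List.ofFn (funext fun i => ?_)
        show ((QuotientGroup.mk' N) ((⇑θ)^[(i:ℕ)] (x i))) = (QuotientGroup.mk' N) ((⇑θ)^[(i:ℕ)] (y i))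
        refine (hKey _ _).mpr ?_
        show ((⇑θ)^[(i:ℕ)] (x i))⁻¹ * (⇑θ)^[(i:ℕ)] (y i) ∈ N
        rw [← UAS_iterInv, ← UAS_iterMul]
        exact hIter _ _ (hxy i)
      · -- skew-compatibility
        intro x y hxy
        have hxy' : x * y⁻¹ ∈ N := by
          have h1 : y⁻¹ * x ∈ N := by simpa [hR] using N.inv_mem hxy
          have := hNorm.conj_mem _ h1 x
          simpa [mul_assoc] using this
        rw [← hKey]
        show ((QuotientGroup.mk' N) (polySkew n θ b x)) = (QuotientGroup.mk' N) (polySkew n θ b y)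
        unfold polySkew
        rw [map_mul, map_mul, map_list_prod, map_list_prod, List.map_ofFn, List.map_ofFn]
        congr 2
        refine congrArg List.ofFn (funext fun i => ?_)
        show ((QuotientGroup.mk' N) ((⇑θ)^[n - 2 - (i:ℕ)] x⁻¹)) =
          (QuotientGroup.mk' N) ((⇑θ)^[n - 2 - (i:ℕ)] y⁻¹)
        refine (hKey _ _).mpr ?_
        show ((⇑θ)^[n - 2 - (i:ℕ)] x⁻¹)⁻¹ * (⇑θ)^[n - 2 - (i:ℕ)] y⁻¹ ∈ N
        rw [← UAS_iterInv, ← UAS_iterMul, inv_inv]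
        exact hIter _ _ hxy'
    rcases hUAS R hcong with htr | hfull
    · left
      rw [Subgroup.eq_bot_iff_forall]
      intro x hx
      have hx' : R 1 x := by simpa [hR] using hx
      exact ((htr 1 x).mp hx').symm
    · right
      rw [Subgroup.eq_top_iff']
      intro x
      have := hfull 1 x
      simpa [hR] using this
  · -- θ-simple → UAS
    intro hN R hR
    obtain ⟨hEq, hF, -⟩ := hR
    -- one-coordinate substitutions
    have hstep : ∀ j : ℕ, 0 < j → j < n → ∀ a u v : G, R u v →
        R (a * (⇑θ)^[j] u * b) (a * (⇑θ)^[j] v * b) := by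
      intro j hj0 hjn a u v huv
      have := hF (fun i => if (i : ℕ) = 0 then a else if (i : ℕ) = j then u else 1)
        (fun i => if (i : ℕ) = 0 then a else if (i : ℕ) = j then v else 1) ?_
      · rwa [UAS_polyFPair n θ b j hj0 hjn, UAS_polyFPair n θ b j hj0 hjn] at this
      · intro i
        by_cases h0 : (i : ℕ) = 0
        · simp only [if_pos h0]
          exact hEq.refl a
        · by_cases hj : (i : ℕ) = j
          · simp only [if_neg h0, if_pos hj]
            exact huv
          · simp only [if_neg h0, if_neg hj]
            exact hEq.refl 1
    have hstep0 : ∀ u x y : G, R x y →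
        R (x * (⇑θ)^[n-1] u * b) (y * (⇑θ)^[n-1] u * b) := by
      intro u x y hxy
      have := hF (fun i => if (i : ℕ) = 0 then x else if (i : ℕ) = n - 1 then u else 1)
        (fun i => if (i : ℕ) = 0 then y else if (i : ℕ) = n - 1 then u else 1) ?_
      · rwa [UAS_polyFPair n θ b (n-1) (by omega) (by omega),
          UAS_polyFPair n θ b (n-1) (by omega) (by omega)] at this
      · intro i
        by_cases h0 : (i : ℕ) = 0
        · simp only [if_pos h0]; exact hxy
        · simp only [if_neg h0]; exact hEq.refl _
    have hRmul : ∀ c x y : G, R x y → R (x * c) (y * c) := by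
      intro c x y hxy
      have := hstep0 (b⁻¹ * c) x y hxy
      rw [hθ] at this
      have he : ∀ z : G, z * (b * (b⁻¹ * c) * b⁻¹) * b = z * c := by intro z; group
      rwa [he, he] at this
    have hLmul : ∀ g u v : G, R u v → R (g * u) (g * v) := by
      intro g u v huv
      have := hstep (n-1) (by omega) (by omega) (g * b⁻¹) u v huv
      rw [hθ, hθ] at this
      have he : ∀ z : G, g * b⁻¹ * (b * z * b⁻¹) * b = g * z := by intro z; group
      rwa [he, he] at this
    have hTh : ∀ u v : G, R u v → R (θ u) (θ v) := by
      intro u v huv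
      have := hstep 1 one_pos (by omega) 1 u v huv
      simp only [Function.iterate_one, one_mul] at this
      have := hRmul b⁻¹ _ _ this
      simpa using this
    -- the associated subgroup
    set N : Subgroup G :=
      { carrier := {x | R 1 x}
        one_mem' := hEq.refl 1
        mul_mem' := fun {a c} ha hc => by
          have := hLmul a 1 c hc
          simp only [mul_one] at this
          exact hEq.trans ha this
        inv_mem' := fun {a} ha => by
          have := hRmul a⁻¹ 1 a ha
          simp only [one_mul, mul_inv_cancel] at this
          exact hEq.symm this } with hNdef
    have hmem : ∀ x : G, x ∈ N ↔ R 1 x := fun x => Iff.rfl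
    have hNormal : N.Normal := by
      constructor
      intro a ha g
      rw [hmem] at ha ⊢
      have h1 := hLmul g 1 a ha
      simp only [mul_one] at h1
      have h2 := hRmul g⁻¹ g (g * a) h1
      simp only [mul_inv_cancel] at h2
      exact hEq.trans (hEq.symm (by simpa using hEq.refl (1 : G))) h2
    have hθinv : ∀ x ∈ N, θ x ∈ N := by
      intro x hx
      rw [hmem] at hx ⊢
      have := hTh 1 x hx
      rwa [map_one] at this
    rcases hN N hNormal hθinv with hbot | htop
    · left
      intro x y
      constructor
      · intro hxy
        have := hLmul x⁻¹ x y hxy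
        simp only [inv_mul_cancel] at this
        have hxy' : x⁻¹ * y ∈ N := (hmem _).mpr this
        rw [hbot, Subgroup.mem_bot] at hxy'
        exact (inv_mul_eq_one.mp hxy')
      · rintro rfl; exact hEq.refl x
    · right
      intro x y
      have hmem' : x⁻¹ * y ∈ N := by rw [htop]; trivial
      have h1 : R 1 (x⁻¹ * y) := (hmem _).mp hmem'
      have := hLmul x 1 (x⁻¹ * y) h1
      simp only [mul_one] at this
      rwa [mul_inv_cancel_left] at this
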